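/- General closed form with L missing points (Proposition 1): with 𝒮₁ = ∅, 𝒮₂ = {u₁}, …, 𝒮_{L+1} = {u₁,…,u_L}, the density of s_{n+1} conditional on the observed data s_{(1:n)\𝒮_{L+1}}, obtained by integrating out s_{u₁},…,s_{u_L} from the product of the one-step conditional densities, equals Σ_{i∈(1:n)\𝒮_{L+1}} w_θ(i,n+1) κ₂(s − sᵢ, h̲) + Σ_{m=1}^{L} Σ_{1≤i₁<⋯<i_m≤L} w_θ(u_{i₁},u_{i₂})⋯w_θ(u_{i_{m−1}},u_{i_m})·w_θ(u_{i_m},n+1) · Σ_{j∈(1:u_{i₁}−1)\𝒮_{i₁}} w_θ(j,u_{i₁}) κ₂(s − s_j, √(m+1)·h̲). -/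

import Mathlib

open MeasureTheory Real

/-- Univariate centered Gaussian density with standard deviation `σ`. -/
noncomputable def gauss1 (σ x : ℝ) : ℝ :=
  (1 / (Real.sqrt (2 * Real.pi) * σ)) * Real.exp (-(x ^ 2) / (2 * σ ^ 2))

/-- Bivariate product Gaussian kernel `κ₂(z, h)`. -/
noncomputable def kernel2 (z h : ℝ × ℝ) : ℝ := gauss1 h.1 z.1 * gauss1 h.2 z.2

/-- The density of the location at time `m`, conditional on the data `σ` with the locations
at times `u 1 < u 2 < ⋯ < u l` unobserved, obtained by recursively integrating out the
missing locations from the one-step conditional (weighted kernel) densities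
`f_Θ(s_m | s_{1:(m−1)}) = Σ_{i=1}^{m−1} w(i,m) κ₂(s_m − sᵢ, h̲)` (equation (3) of the paper). -/
noncomputable def condDens (w : ℕ → ℕ → ℝ) (hb : ℝ × ℝ) (u : ℕ → ℕ) :
    ℕ → (ℕ → ℝ × ℝ) → ℕ → (ℝ × ℝ) → ℝ
  | 0, σ, m, s => ∑ i ∈ Finset.Icc 1 (m - 1), w i m * kernel2 (s - σ i) hb
  | l + 1, σ, m, s =>
      ∫ z : ℝ × ℝ,
        condDens w hb u l (Function.update σ (u (l + 1)) z) m s *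
          condDens w hb u l σ (u (l + 1)) z

open scoped Classical

lemma gauss1_eq (σ : ℝ) : gauss1 σ = fun x =>
    (1 / (Real.sqrt (2 * Real.pi) * σ)) * Real.exp (-(1 / (2 * σ ^ 2)) * x ^ 2) := by
  funext x
  unfold gauss1
  congr 1
  · ring_nf

lemma integrable_gauss1 {σ : ℝ} (hσ : 0 < σ) : Integrable (gauss1 σ) := by
  rw [gauss1_eq]
  exact (integrable_exp_neg_mul_sq (by positivity)).const_mul _

lemma integral_gauss1 {σ : ℝ} (hσ : 0 < σ) : ∫ x, gauss1 σ x = 1 := by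
  rw [gauss1_eq]
  rw [MeasureTheory.integral_const_mul, integral_gaussian]
  have h1 : Real.pi / (1 / (2 * σ ^ 2)) = (2 * Real.pi) * σ ^ 2 := by
    field_simp
  rw [h1, Real.sqrt_mul (by positivity : (0:ℝ) ≤ 2 * Real.pi) (σ^2), Real.sqrt_sq hσ.le]
  field_simp

lemma gauss1_mul {a b : ℝ} (ha : 0 < a) (hb : 0 < b) (x y z : ℝ) :
    gauss1 a (x - z) * gauss1 b (z - y) =
      gauss1 (Real.sqrt (a ^ 2 + b ^ 2)) (x - y) *
        gauss1 (a * b / Real.sqrt (a ^ 2 + b ^ 2))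
          (z - (b ^ 2 * x + a ^ 2 * y) / (a ^ 2 + b ^ 2)) := by
  have hab : (0:ℝ) < a ^ 2 + b ^ 2 := by positivity
  have hc : 0 < Real.sqrt (a ^ 2 + b ^ 2) := Real.sqrt_pos.mpr hab
  have hc2 : Real.sqrt (a ^ 2 + b ^ 2) ^ 2 = a ^ 2 + b ^ 2 := Real.sq_sqrt hab.le
  unfold gauss1
  rw [mul_mul_mul_comm, mul_mul_mul_comm (1 / (Real.sqrt (2 * Real.pi) * Real.sqrt (a^2+b^2))),
    ← Real.exp_add, ← Real.exp_add]
  congr 1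
  · field_simp
  · congr 1
    rw [div_pow, mul_pow, hc2]
    field_simp
    ring

lemma integrable_gauss1_mul {a b : ℝ} (ha : 0 < a) (hb : 0 < b) (x y : ℝ) :
    Integrable (fun z => gauss1 a (x - z) * gauss1 b (z - y)) := by
  have hab : (0:ℝ) < a ^ 2 + b ^ 2 := by positivity
  have hc : 0 < Real.sqrt (a ^ 2 + b ^ 2) := Real.sqrt_pos.mpr hab
  have hd : 0 < a * b / Real.sqrt (a ^ 2 + b ^ 2) := by positivity
  simp only [gauss1_mul ha hb x y]
  exact ((integrable_gauss1 hd).comp_sub_right _).const_mul _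

lemma gauss1_conv {a b : ℝ} (ha : 0 < a) (hb : 0 < b) (x y : ℝ) :
    ∫ z, gauss1 a (x - z) * gauss1 b (z - y) =
      gauss1 (Real.sqrt (a ^ 2 + b ^ 2)) (x - y) := by
  have hab : (0:ℝ) < a ^ 2 + b ^ 2 := by positivity
  have hd : 0 < a * b / Real.sqrt (a ^ 2 + b ^ 2) := by
    have := Real.sqrt_pos.mpr hab; positivity
  simp only [gauss1_mul ha hb x y]
  rw [MeasureTheory.integral_const_mul,
    integral_sub_right_eq_self (f := fun t => gauss1 (a * b / Real.sqrt (a ^ 2 + b ^ 2)) t),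
    integral_gauss1 hd, mul_one]

lemma gauss1_pos {σ : ℝ} (hσ : 0 < σ) (x : ℝ) : 0 < gauss1 σ x := by
  unfold gauss1
  positivity

/-- 2D lemmas -/
lemma kernel2_sub_fst (s z : ℝ × ℝ) (h : ℝ × ℝ) :
    kernel2 (s - z) h = gauss1 h.1 (s.1 - z.1) * gauss1 h.2 (s.2 - z.2) := rfl

lemma integrable_kernel2 {h : ℝ × ℝ} (h1 : 0 < h.1) (h2 : 0 < h.2) (p : ℝ × ℝ) :
    Integrable (fun z : ℝ × ℝ => kernel2 (z - p) h) := by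
  rw [Measure.volume_eq_prod]
  exact ((integrable_gauss1 h1).comp_sub_right p.1).mul_prod
    ((integrable_gauss1 h2).comp_sub_right p.2)

lemma integral_kernel2 {h : ℝ × ℝ} (h1 : 0 < h.1) (h2 : 0 < h.2) (p : ℝ × ℝ) :
    ∫ z : ℝ × ℝ, kernel2 (z - p) h = 1 := by
  rw [Measure.volume_eq_prod]
  rw [show (fun z : ℝ × ℝ => kernel2 (z - p) h) = fun z : ℝ × ℝ =>
      (fun t => gauss1 h.1 (t - p.1)) z.1 * (fun t => gauss1 h.2 (t - p.2)) z.2 from rfl]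
  rw [MeasureTheory.integral_prod_mul (fun t => gauss1 h.1 (t - p.1)) (fun t => gauss1 h.2 (t - p.2))]
  rw [integral_sub_right_eq_self (f := gauss1 h.1), integral_sub_right_eq_self (f := gauss1 h.2),
    integral_gauss1 h1, integral_gauss1 h2, mul_one]

lemma integrable_kernel2_mul {a b : ℝ × ℝ} (ha1 : 0 < a.1) (ha2 : 0 < a.2)
    (hb1 : 0 < b.1) (hb2 : 0 < b.2) (s p : ℝ × ℝ) :
    Integrable (fun z : ℝ × ℝ => kernel2 (s - z) a * kernel2 (z - p) b) := by
  rw [Measure.volume_eq_prod]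
  rw [show (fun z : ℝ × ℝ => kernel2 (s - z) a * kernel2 (z - p) b) = fun z : ℝ × ℝ =>
      (fun t => gauss1 a.1 (s.1 - t) * gauss1 b.1 (t - p.1)) z.1 *
      (fun t => gauss1 a.2 (s.2 - t) * gauss1 b.2 (t - p.2)) z.2 from by
      funext z; simp only [kernel2, Prod.fst_sub, Prod.snd_sub]; ring]
  exact (integrable_gauss1_mul ha1 hb1 s.1 p.1).mul_prod (integrable_gauss1_mul ha2 hb2 s.2 p.2)

lemma kernel2_conv {a b : ℝ × ℝ} (ha1 : 0 < a.1) (ha2 : 0 < a.2)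
    (hb1 : 0 < b.1) (hb2 : 0 < b.2) (s p : ℝ × ℝ) :
    ∫ z : ℝ × ℝ, kernel2 (s - z) a * kernel2 (z - p) b =
      kernel2 (s - p) (Real.sqrt (a.1 ^ 2 + b.1 ^ 2), Real.sqrt (a.2 ^ 2 + b.2 ^ 2)) := by
  rw [Measure.volume_eq_prod]
  rw [show (fun z : ℝ × ℝ => kernel2 (s - z) a * kernel2 (z - p) b) = fun z : ℝ × ℝ =>
      (fun t => gauss1 a.1 (s.1 - t) * gauss1 b.1 (t - p.1)) z.1 *
      (fun t => gauss1 a.2 (s.2 - t) * gauss1 b.2 (t - p.2)) z.2 from by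
      funext z; simp only [kernel2, Prod.fst_sub, Prod.snd_sub]; ring]
  rw [MeasureTheory.integral_prod_mul (fun t => gauss1 a.1 (s.1 - t) * gauss1 b.1 (t - p.1))
    (fun t => gauss1 a.2 (s.2 - t) * gauss1 b.2 (t - p.2)), gauss1_conv ha1 hb1, gauss1_conv ha2 hb2]
  rfl

open scoped Classical

lemma strictMono_castSucc_comp {l m' : ℕ} {c' : Fin m' → Fin l} (h : StrictMono c') :
    StrictMono (fun i => (c' i).castSucc : Fin m' → Fin (l + 1)) := fun i j hij => by
  simpa [Fin.castSucc_lt_castSucc_iff] using h hij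

lemma strictMono_snoc {l m' : ℕ} {c' : Fin m' → Fin l} (h : StrictMono c') :
    StrictMono (Fin.snoc (fun i => (c' i).castSucc) (Fin.last l) : Fin (m' + 1) → Fin (l + 1)) := by
  intro i j hij
  induction j using Fin.lastCases with
  | last =>
      obtain ⟨i', rfl⟩ := Fin.exists_castSucc_eq.mpr (Fin.ne_last_of_lt hij)
      simp [Fin.snoc_castSucc, Fin.snoc_last, Fin.castSucc_lt_last]
  | cast j' =>
      obtain ⟨i', rfl⟩ := Fin.exists_castSucc_eq.mpr (Fin.ne_last_of_lt hij)
      simp only [Fin.snoc_castSucc]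
      exact Fin.castSucc_lt_castSucc_iff.mpr (h (Fin.castSucc_lt_castSucc_iff.mp hij))

lemma no_chain (l : ℕ) :
    Finset.univ.filter (fun c : Fin (l + 1) → Fin l => StrictMono c) = ∅ := by
  rw [Finset.eq_empty_iff_forall_notMem]
  intro c hc
  rw [Finset.mem_filter] at hc
  have := Fintype.card_le_of_injective c hc.2.injective
  simp at this

lemma chainSplit (l m' : ℕ) (T : (Fin (m' + 1) → Fin (l + 1)) → ℝ) :
    ∑ c ∈ Finset.univ.filter (fun c : Fin (m' + 1) → Fin (l + 1) => StrictMono c), T c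
      = (∑ c' ∈ Finset.univ.filter (fun c' : Fin (m' + 1) → Fin l => StrictMono c'),
          T (fun i => (c' i).castSucc))
        + ∑ c' ∈ Finset.univ.filter (fun c' : Fin m' → Fin l => StrictMono c'),
          T (Fin.snoc (fun i => (c' i).castSucc) (Fin.last l)) := by
  rw [← Finset.sum_filter_add_sum_filter_not
    (Finset.univ.filter (fun c : Fin (m' + 1) → Fin (l + 1) => StrictMono c))
    (fun c => c (Fin.last m') ≠ Fin.last l)]
  congr 1
  · refine (Finset.sum_bij (fun (c' : Fin (m' + 1) → Fin l) _ => fun i => (c' i).castSucc)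
      ?_ ?_ ?_ ?_).symm
    · intro c' hc'
      rw [Finset.mem_filter] at hc' ⊢
      rw [Finset.mem_filter]
      exact ⟨⟨Finset.mem_univ _, strictMono_castSucc_comp hc'.2⟩,
        Fin.ne_last_of_lt (Fin.castSucc_lt_last _)⟩
    · intro a ha b hb hab
      funext i
      exact Fin.castSucc_injective _ (congrFun hab i)
    · intro c hc
      rw [Finset.mem_filter, Finset.mem_filter] at hc
      have hlt : ∀ i, c i ≠ Fin.last l := by
        intro i
        have h1 : c i ≤ c (Fin.last m') := hc.1.2.monotone (Fin.le_last i)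
        have h2 : c (Fin.last m') < Fin.last l := (Fin.le_last _).lt_of_ne hc.2
        exact Fin.ne_last_of_lt (lt_of_le_of_lt h1 h2)
      refine ⟨fun i => (c i).castPred (hlt i), ?_, ?_⟩
      · rw [Finset.mem_filter]
        refine ⟨Finset.mem_univ _, fun i j hij => ?_⟩
        have := hc.1.2 hij
        simp only [Fin.lt_def, Fin.coe_castPred] at *
        exact this
      · funext i
        simp [Fin.castSucc_castPred]
    · intro c' hc'
      rfl
  · refine (Finset.sum_bij
      (fun (c' : Fin m' → Fin l) _ => Fin.snoc (fun i => (c' i).castSucc) (Fin.last l)) ?_ ?_ ?_ ?_).symm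
    · intro c' hc'
      rw [Finset.mem_filter] at hc'
      rw [Finset.mem_filter, Finset.mem_filter]
      refine ⟨⟨Finset.mem_univ _, strictMono_snoc hc'.2⟩, ?_⟩
      simp [Fin.snoc_last]
    · intro a ha b hb hab
      funext i
      have := congrFun hab i.castSucc
      simp only [Fin.snoc_castSucc] at this
      exact Fin.castSucc_injective _ this
    · intro c hc
      rw [Finset.mem_filter, Finset.mem_filter, not_not] at hc
      have hlt : ∀ i : Fin m', c i.castSucc ≠ Fin.last l := by
        intro i
        have h1 : c i.castSucc < c (Fin.last m') := hc.1.2 (Fin.castSucc_lt_last i)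
        rw [hc.2] at h1
        exact Fin.ne_last_of_lt h1
      refine ⟨fun i => (c i.castSucc).castPred (hlt i), ?_, ?_⟩
      · rw [Finset.mem_filter]
        refine ⟨Finset.mem_univ _, fun i j hij => ?_⟩
        have := hc.1.2 (Fin.castSucc_lt_castSucc_iff.mpr hij)
        simp only [Fin.lt_def, Fin.coe_castPred] at *
        exact this
      · funext i
        induction i using Fin.lastCases with
        | last => simp [Fin.snoc_last, hc.2]
        | cast i' => simp [Fin.snoc_castSucc, Fin.castSucc_castPred]
    · intro c' hc'
      rfl

lemma filter_inst {α : Type*} (p : α → Prop) (h1 h2 : DecidablePred p) (s : Finset α) :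
    @Finset.filter α p h1 s = @Finset.filter α p h2 s := by
  have : h1 = h2 := Subsingleton.elim _ _
  rw [this]

lemma snoc_apply_zero' {n : ℕ} {α : Sort*} (g : Fin (n + 1) → α) (y : α) :
    (Fin.snoc g y : Fin (n + 2) → α) 0 = g 0 := by
  rw [← Fin.castSucc_zero, Fin.snoc_castSucc]

lemma snoc_zero_apply {α : Sort*} (g : Fin 0 → α) (y : α) :
    (Fin.snoc g y : Fin 1 → α) 0 = y := by
  rw [show (0 : Fin 1) = Fin.last 0 from rfl, Fin.snoc_last]

noncomputable def headSum (w : ℕ → ℕ → ℝ) (u : ℕ → ℕ) (l m : ℕ) (K0 : ℕ → ℝ) : ℝ :=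
  ∑ i ∈ (Finset.Icc 1 (m - 1)).filter (fun i => ∀ k, 1 ≤ k → k ≤ l → u k ≠ i), w i m * K0 i

noncomputable def tailSum (w : ℕ → ℕ → ℝ) (u : ℕ → ℕ) (l m : ℕ) (K : ℕ → ℕ → ℝ) : ℝ :=
  ∑ m' ∈ Finset.range l,
    ∑ c ∈ Finset.univ.filter (fun c : Fin (m' + 1) → Fin l => StrictMono c),
      (∏ k : Fin m', w (u ((c k.castSucc).val + 1)) (u ((c k.succ).val + 1))) *
        w (u ((c (Fin.last m')).val + 1)) m *
        ∑ j ∈ (Finset.Icc 1 (u ((c 0).val + 1) - 1)).filter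
            (fun j => ∀ k, 1 ≤ k → k ≤ (c 0).val → u k ≠ j),
          w j (u ((c 0).val + 1)) * K m' j

lemma tail_succ (w : ℕ → ℕ → ℝ) (u : ℕ → ℕ) (l m : ℕ) (K : ℕ → ℕ → ℝ) :
    tailSum w u (l + 1) m K
      = tailSum w u l m K
        + w (u (l + 1)) m *
            (headSum w u l (u (l + 1)) (K 0)
              + tailSum w u l (u (l + 1)) (fun m' j => K (m' + 1) j)) := by
  unfold tailSum
  rw [Finset.sum_congr rfl (fun m' _ => chainSplit l m' _), Finset.sum_add_distrib]
  congr 1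
  · -- chains avoiding the new last point
    rw [Finset.sum_range_succ, no_chain, Finset.sum_empty, add_zero]
    refine Finset.sum_congr rfl fun m' _ => Finset.sum_congr rfl fun c' _ => ?_
    simp only [Fin.coe_castSucc]
    congr 1
    exact Finset.sum_congr (filter_inst _ _ _ _) fun j _ => rfl
  · -- chains through the new last point
    rw [Finset.sum_range_succ']
    rw [add_comm, mul_add]
    congr 1
    · -- the length-one chain
      have huniq : (Finset.univ.filter (fun c' : Fin 0 → Fin l => StrictMono c'))
          = {fun i => i.elim0} := by
        apply Finset.eq_singleton_iff_unique_mem.mpr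
        constructor
        · exact Finset.mem_filter.mpr ⟨Finset.mem_univ _, fun a b _ => a.elim0⟩
        · intro c _; funext i; exact i.elim0
      rw [huniq, Finset.sum_singleton]
      simp only [snoc_zero_apply, Fin.snoc_last, Fin.val_last, Finset.univ_eq_empty,
        Finset.prod_empty, one_mul, headSum, Finset.mul_sum]
      exact Finset.sum_congr (filter_inst _ _ _ _) fun j _ => rfl
    · -- longer chains
      rw [Finset.mul_sum]
      refine Finset.sum_congr rfl fun m' _ => ?_
      rw [Finset.mul_sum]
      refine Finset.sum_congr rfl fun c' _ => ?_
      rw [Fin.prod_univ_castSucc]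
      simp only [Fin.succ_castSucc, Fin.snoc_castSucc, Fin.succ_last, Fin.snoc_last,
        Fin.coe_castSucc, Fin.val_last, snoc_apply_zero']
      simp only [Finset.mul_sum]
      exact Finset.sum_congr (filter_inst _ _ _ _) fun j _ => by ring

lemma head_succ (w : ℕ → ℕ → ℝ) (u : ℕ → ℕ) (l m : ℕ) (K0 : ℕ → ℝ)
    (hv1 : 1 ≤ u (l + 1)) (hv2 : u (l + 1) ≤ m - 1)
    (hne : ∀ k, 1 ≤ k → k ≤ l → u k ≠ u (l + 1)) :
    headSum w u l m K0 = headSum w u (l + 1) m K0 + w (u (l + 1)) m * K0 (u (l + 1)) := by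
  classical
  unfold headSum
  have hset : (Finset.Icc 1 (m - 1)).filter (fun i => ∀ k, 1 ≤ k → k ≤ l → u k ≠ i)
      = insert (u (l + 1))
          ((Finset.Icc 1 (m - 1)).filter (fun i => ∀ k, 1 ≤ k → k ≤ l + 1 → u k ≠ i)) := by
    ext i
    simp only [Finset.mem_insert, Finset.mem_filter, Finset.mem_Icc]
    constructor
    · rintro ⟨hicc, hk⟩
      by_cases hiv : i = u (l + 1)
      · exact Or.inl hiv
      · refine Or.inr ⟨hicc, fun k hk1 hk2 => ?_⟩
        rcases Nat.lt_or_ge k (l + 1) with h | h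
        · exact hk k hk1 (Nat.lt_succ_iff.mp h)
        · have : k = l + 1 := le_antisymm hk2 h
          rw [this]
          exact fun hc => hiv hc.symm
    · rintro (rfl | ⟨hicc, hk⟩)
      · exact ⟨⟨hv1, hv2⟩, hne⟩
      · exact ⟨hicc, fun k hk1 hk2 => hk k hk1 (le_trans hk2 (Nat.le_succ l))⟩
  have hnot : u (l + 1) ∉
      (Finset.Icc 1 (m - 1)).filter (fun i => ∀ k, 1 ≤ k → k ≤ l + 1 → u k ≠ i) := by
    intro hmem
    simp only [Finset.mem_filter] at hmem
    exact hmem.2 (l + 1) (Nat.le_add_left 1 l) le_rfl rfl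
  refine (Finset.sum_congr hset fun x _ => rfl).trans ?_
  rw [Finset.sum_insert hnot, add_comm]

lemma u_lt_of_lt (u : ℕ → ℕ) (L : ℕ) (humono : ∀ k, 1 ≤ k → k < L → u k < u (k + 1)) :
    ∀ a b, 1 ≤ a → a < b → b ≤ L → u a < u b := by
  intro a b ha hab hbL
  induction b with
  | zero => omega
  | succ b ih =>
      rcases Nat.lt_or_ge a b with h | h
      · exact lt_trans (ih h (le_trans (Nat.le_succ b) hbL)) (humono b (by omega) (by omega))
      · have : a = b := by omega
        subst this
        exact humono a ha (by omega)

lemma mass_eq (w : ℕ → ℕ → ℝ) (u : ℕ → ℕ) (L : ℕ)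
    (hnorm : ∀ m, 2 ≤ m → ∑ i ∈ Finset.Icc 1 (m - 1), w i m = 1)
    (hu1 : ∀ k, 1 ≤ k → k ≤ L → 1 < u k)
    (humono : ∀ k, 1 ≤ k → k < L → u k < u (k + 1)) :
    ∀ l, l ≤ L → ∀ m, 2 ≤ m → (∀ k, 1 ≤ k → k ≤ l → u k < m) →
      headSum w u l m (fun _ => 1) + tailSum w u l m (fun _ _ => 1) = 1 := by
  intro l
  induction l with
  | zero =>
      intro _ m hm _
      classical
      rw [headSum, tailSum, Finset.range_zero, Finset.sum_empty, add_zero]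
      rw [Finset.sum_congr (filter_inst _ _ _ _) (fun x _ => rfl)]
      rw [Finset.filter_true_of_mem (fun i _ => by omega)]
      simp only [mul_one]
      exact hnorm m hm
  | succ l ih =>
      intro hlL m hm hum
      have hlL' : l ≤ L := le_trans (Nat.le_succ l) hlL
      have hvm : u (l + 1) < m := hum (l + 1) (by omega) le_rfl
      have hv2 : 2 ≤ u (l + 1) := hu1 (l + 1) (by omega) hlL
      have hne : ∀ k, 1 ≤ k → k ≤ l → u k ≠ u (l + 1) := fun k hk1 hk2 =>
        Nat.ne_of_lt (u_lt_of_lt u L humono k (l + 1) hk1 (by omega) hlL)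
      have hukv : ∀ k, 1 ≤ k → k ≤ l → u k < u (l + 1) := fun k hk1 hk2 =>
        u_lt_of_lt u L humono k (l + 1) hk1 (by omega) hlL
      have h1 := head_succ w u l m (fun _ => 1) (by omega) (by omega) hne
      have h2 := ih hlL' m hm (fun k hk1 hk2 => hum k hk1 (by omega))
      have h3 := ih hlL' (u (l + 1)) hv2 hukv
      rw [tail_succ]
      beta_reduce at h1 h2 h3 ⊢
      rw [h3]
      linarith [h1, h2]

section Analytic

variable {w : ℕ → ℕ → ℝ} {u : ℕ → ℕ} {l v : ℕ} {σ : ℕ → ℝ × ℝ}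

lemma integrable_headK (w : ℕ → ℕ → ℝ) (u : ℕ → ℕ) (l v : ℕ) (σ : ℕ → ℝ × ℝ)
    {b : ℝ × ℝ} (h1 : 0 < b.1) (h2 : 0 < b.2) :
    MeasureTheory.Integrable (fun z : ℝ × ℝ =>
      headSum w u l v (fun i => kernel2 (z - σ i) b)) := by
  unfold headSum
  apply MeasureTheory.integrable_finset_sum
  intro i _
  exact (integrable_kernel2 h1 h2 (σ i)).const_mul _

lemma integral_headK (w : ℕ → ℕ → ℝ) (u : ℕ → ℕ) (l v : ℕ) (σ : ℕ → ℝ × ℝ)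
    {b : ℝ × ℝ} (h1 : 0 < b.1) (h2 : 0 < b.2) :
    ∫ z : ℝ × ℝ, headSum w u l v (fun i => kernel2 (z - σ i) b)
      = headSum w u l v (fun _ => 1) := by
  unfold headSum
  rw [MeasureTheory.integral_finset_sum _
    (fun i _ => (integrable_kernel2 h1 h2 (σ i)).const_mul _)]
  refine Finset.sum_congr rfl fun i _ => ?_
  rw [MeasureTheory.integral_const_mul, integral_kernel2 h1 h2]

lemma integrable_mul_headK (w : ℕ → ℕ → ℝ) (u : ℕ → ℕ) (l v : ℕ) (σ : ℕ → ℝ × ℝ)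
    {a b : ℝ × ℝ} (ha1 : 0 < a.1) (ha2 : 0 < a.2) (h1 : 0 < b.1) (h2 : 0 < b.2) (s : ℝ × ℝ) :
    MeasureTheory.Integrable (fun z : ℝ × ℝ =>
      kernel2 (s - z) a * headSum w u l v (fun i => kernel2 (z - σ i) b)) := by
  simp only [headSum, Finset.mul_sum]
  apply MeasureTheory.integrable_finset_sum
  intro i _
  have heq : (fun z : ℝ × ℝ => kernel2 (s - z) a * (w i v * kernel2 (z - σ i) b))
      = fun z : ℝ × ℝ => w i v * (kernel2 (s - z) a * kernel2 (z - σ i) b) := by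
    funext z; ring
  rw [heq]
  exact (integrable_kernel2_mul ha1 ha2 h1 h2 s (σ i)).const_mul _

lemma conv_headK (w : ℕ → ℕ → ℝ) (u : ℕ → ℕ) (l v : ℕ) (σ : ℕ → ℝ × ℝ)
    {a b : ℝ × ℝ} (ha1 : 0 < a.1) (ha2 : 0 < a.2) (h1 : 0 < b.1) (h2 : 0 < b.2) (s : ℝ × ℝ) :
    ∫ z : ℝ × ℝ, kernel2 (s - z) a * headSum w u l v (fun i => kernel2 (z - σ i) b)
      = headSum w u l v (fun i => kernel2 (s - σ i)
          (Real.sqrt (a.1 ^ 2 + b.1 ^ 2), Real.sqrt (a.2 ^ 2 + b.2 ^ 2))) := by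
  simp only [headSum, Finset.mul_sum]
  rw [MeasureTheory.integral_finset_sum]
  · refine Finset.sum_congr rfl fun i _ => ?_
    have heq : (fun z : ℝ × ℝ => kernel2 (s - z) a * (w i v * kernel2 (z - σ i) b))
        = fun z : ℝ × ℝ => w i v * (kernel2 (s - z) a * kernel2 (z - σ i) b) := by
      funext z; ring
    rw [heq, MeasureTheory.integral_const_mul, kernel2_conv ha1 ha2 h1 h2]
  · intro i _
    have heq : (fun z : ℝ × ℝ => kernel2 (s - z) a * (w i v * kernel2 (z - σ i) b))
        = fun z : ℝ × ℝ => w i v * (kernel2 (s - z) a * kernel2 (z - σ i) b) := by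
      funext z; ring
    rw [heq]
    exact (integrable_kernel2_mul ha1 ha2 h1 h2 s (σ i)).const_mul _

lemma integrable_tailK (w : ℕ → ℕ → ℝ) (u : ℕ → ℕ) (l v : ℕ) (σ : ℕ → ℝ × ℝ)
    (B : ℕ → ℝ × ℝ) (hB : ∀ m', 0 < (B m').1 ∧ 0 < (B m').2) :
    MeasureTheory.Integrable (fun z : ℝ × ℝ =>
      tailSum w u l v (fun m' j => kernel2 (z - σ j) (B m'))) := by
  unfold tailSum
  apply MeasureTheory.integrable_finset_sum
  intro m' _
  apply MeasureTheory.integrable_finset_sum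
  intro c _
  apply MeasureTheory.Integrable.const_mul
  apply MeasureTheory.integrable_finset_sum
  intro j _
  exact (integrable_kernel2 (hB m').1 (hB m').2 (σ j)).const_mul _

lemma integral_tailK (w : ℕ → ℕ → ℝ) (u : ℕ → ℕ) (l v : ℕ) (σ : ℕ → ℝ × ℝ)
    (B : ℕ → ℝ × ℝ) (hB : ∀ m', 0 < (B m').1 ∧ 0 < (B m').2) :
    ∫ z : ℝ × ℝ, tailSum w u l v (fun m' j => kernel2 (z - σ j) (B m'))
      = tailSum w u l v (fun _ _ => 1) := by
  unfold tailSum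
  rw [MeasureTheory.integral_finset_sum]
  · refine Finset.sum_congr rfl fun m' _ => ?_
    rw [MeasureTheory.integral_finset_sum]
    · refine Finset.sum_congr rfl fun c _ => ?_
      rw [MeasureTheory.integral_const_mul]
      congr 1
      rw [MeasureTheory.integral_finset_sum
        (f := fun j z => w j (u ((c 0).val + 1)) * kernel2 (z - σ j) (B m'))
        _ (fun j _ => (integrable_kernel2 (hB m').1 (hB m').2 (σ j)).const_mul _)]
      refine Finset.sum_congr rfl fun j _ => ?_
      rw [MeasureTheory.integral_const_mul, integral_kernel2 (hB m').1 (hB m').2]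
    · intro c _
      apply MeasureTheory.Integrable.const_mul
      apply MeasureTheory.integrable_finset_sum
      intro j _
      exact (integrable_kernel2 (hB m').1 (hB m').2 (σ j)).const_mul _
  · intro m' _
    apply MeasureTheory.integrable_finset_sum
    intro c _
    apply MeasureTheory.Integrable.const_mul
    apply MeasureTheory.integrable_finset_sum
    intro j _
    exact (integrable_kernel2 (hB m').1 (hB m').2 (σ j)).const_mul _

lemma mul_kernel_massage {a b : ℝ × ℝ} (s p : ℝ × ℝ) (X wj : ℝ) :
    (fun z : ℝ × ℝ => kernel2 (s - z) a * (X * (wj * kernel2 (z - p) b)))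
      = fun z : ℝ × ℝ => (X * wj) * (kernel2 (s - z) a * kernel2 (z - p) b) := by
  funext z; ring

lemma integrable_mul_inner {a b : ℝ × ℝ} (ha1 : 0 < a.1) (ha2 : 0 < a.2)
    (h1 : 0 < b.1) (h2 : 0 < b.2) (s p : ℝ × ℝ) (X wj : ℝ) :
    MeasureTheory.Integrable
      (fun z : ℝ × ℝ => kernel2 (s - z) a * (X * (wj * kernel2 (z - p) b))) := by
  rw [mul_kernel_massage]
  exact (integrable_kernel2_mul ha1 ha2 h1 h2 s p).const_mul _

lemma integrable_mul_tailK (w : ℕ → ℕ → ℝ) (u : ℕ → ℕ) (l v : ℕ) (σ : ℕ → ℝ × ℝ)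
    {a : ℝ × ℝ} (ha1 : 0 < a.1) (ha2 : 0 < a.2)
    (B : ℕ → ℝ × ℝ) (hB : ∀ m', 0 < (B m').1 ∧ 0 < (B m').2) (s : ℝ × ℝ) :
    MeasureTheory.Integrable (fun z : ℝ × ℝ =>
      kernel2 (s - z) a * tailSum w u l v (fun m' j => kernel2 (z - σ j) (B m'))) := by
  simp only [tailSum, Finset.mul_sum]
  apply MeasureTheory.integrable_finset_sum
  intro m' _
  apply MeasureTheory.integrable_finset_sum
  intro c _
  apply MeasureTheory.integrable_finset_sum
  intro j _
  exact integrable_mul_inner ha1 ha2 (hB m').1 (hB m').2 s (σ j) _ _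

lemma conv_tailK (w : ℕ → ℕ → ℝ) (u : ℕ → ℕ) (l v : ℕ) (σ : ℕ → ℝ × ℝ)
    {a : ℝ × ℝ} (ha1 : 0 < a.1) (ha2 : 0 < a.2)
    (B : ℕ → ℝ × ℝ) (hB : ∀ m', 0 < (B m').1 ∧ 0 < (B m').2) (s : ℝ × ℝ) :
    ∫ z : ℝ × ℝ, kernel2 (s - z) a * tailSum w u l v (fun m' j => kernel2 (z - σ j) (B m'))
      = tailSum w u l v (fun m' j => kernel2 (s - σ j)
          (Real.sqrt (a.1 ^ 2 + (B m').1 ^ 2), Real.sqrt (a.2 ^ 2 + (B m').2 ^ 2))) := by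
  simp only [tailSum, Finset.mul_sum]
  rw [MeasureTheory.integral_finset_sum _ (fun m' _ =>
    MeasureTheory.integrable_finset_sum _ (fun c _ =>
      MeasureTheory.integrable_finset_sum _ (fun j _ =>
        integrable_mul_inner ha1 ha2 (hB m').1 (hB m').2 s (σ j) _ _)))]
  refine Finset.sum_congr rfl fun m' _ => ?_
  rw [MeasureTheory.integral_finset_sum _ (fun c _ =>
    MeasureTheory.integrable_finset_sum _ (fun j _ =>
      integrable_mul_inner ha1 ha2 (hB m').1 (hB m').2 s (σ j) _ _))]
  refine Finset.sum_congr rfl fun c _ => ?_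
  rw [MeasureTheory.integral_finset_sum _ (fun j _ =>
    integrable_mul_inner ha1 ha2 (hB m').1 (hB m').2 s (σ j) _ _)]
  refine Finset.sum_congr rfl fun j _ => ?_
  rw [mul_kernel_massage, MeasureTheory.integral_const_mul,
    kernel2_conv ha1 ha2 (hB m').1 (hB m').2]
  ring

end Analytic

noncomputable def CF (w : ℕ → ℕ → ℝ) (hb : ℝ × ℝ) (u : ℕ → ℕ) (l m : ℕ)
    (σ : ℕ → ℝ × ℝ) (s : ℝ × ℝ) : ℝ :=
  headSum w u l m (fun i => kernel2 (s - σ i) hb)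
    + tailSum w u l m (fun m' j => kernel2 (s - σ j)
        (Real.sqrt ((m' : ℝ) + 2) * hb.1, Real.sqrt ((m' : ℝ) + 2) * hb.2))

lemma headSum_congr {w : ℕ → ℕ → ℝ} {u : ℕ → ℕ} {l m : ℕ} {K0 K0' : ℕ → ℝ}
    (h : ∀ i, K0 i = K0' i) : headSum w u l m K0 = headSum w u l m K0' :=
  Finset.sum_congr rfl fun i _ => by rw [h]

lemma tailSum_congr {w : ℕ → ℕ → ℝ} {u : ℕ → ℕ} {l m : ℕ} {K K' : ℕ → ℕ → ℝ}
    (h : ∀ m' j, K m' j = K' m' j) : tailSum w u l m K = tailSum w u l m K' :=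
  Finset.sum_congr rfl fun m' _ => Finset.sum_congr rfl fun c _ => by
    congr 1
    exact Finset.sum_congr rfl fun j _ => by rw [h]

lemma sqrt_two_mul_self' {x : ℝ} (hx : 0 < x) :
    Real.sqrt (x ^ 2 + x ^ 2) = Real.sqrt (((0 : ℕ) : ℝ) + 2) * x := by
  rw [show x ^ 2 + x ^ 2 = 2 * x ^ 2 by ring, Real.sqrt_mul (by norm_num), Real.sqrt_sq hx.le]
  norm_num

lemma sqrt_succ_mul {x : ℝ} (hx : 0 < x) (m' : ℕ) :
    Real.sqrt (x ^ 2 + (Real.sqrt ((m' : ℝ) + 2) * x) ^ 2)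
      = Real.sqrt (((m' : ℕ) + 1 : ℕ) + 2 : ℝ) * x := by
  rw [mul_pow, Real.sq_sqrt (by positivity)]
  rw [show x ^ 2 + ((m' : ℝ) + 2) * x ^ 2 = ((m' : ℝ) + 3) * x ^ 2 by ring]
  rw [Real.sqrt_mul (by positivity), Real.sqrt_sq hx.le]
  congr 2
  push_cast
  ring

lemma CF_update (w : ℕ → ℕ → ℝ) (u : ℕ → ℕ) (L : ℕ)
    (hu1 : ∀ k, 1 ≤ k → k ≤ L → 1 < u k)
    (humono : ∀ k, 1 ≤ k → k < L → u k < u (k + 1))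
    (l : ℕ) (hlL : l + 1 ≤ L) (m : ℕ) (hvm : u (l + 1) < m)
    (σ : ℕ → ℝ × ℝ) (z : ℝ × ℝ) (s : ℝ × ℝ) (hb : ℝ × ℝ) :
    CF w hb u l m (Function.update σ (u (l + 1)) z) s
      = (headSum w u (l + 1) m (fun i => kernel2 (s - σ i) hb)
          + tailSum w u l m (fun m' j => kernel2 (s - σ j)
              (Real.sqrt ((m' : ℝ) + 2) * hb.1, Real.sqrt ((m' : ℝ) + 2) * hb.2)))
        + w (u (l + 1)) m * kernel2 (s - z) hb := by
  have hv2 : 2 ≤ u (l + 1) := hu1 (l + 1) (by omega) hlL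
  have hne : ∀ k, 1 ≤ k → k ≤ l → u k ≠ u (l + 1) := fun k hk1 hk2 =>
    Nat.ne_of_lt (u_lt_of_lt u L humono k (l + 1) hk1 (by omega) hlL)
  rw [CF]
  have hhead : headSum w u l m (fun i => kernel2 (s - Function.update σ (u (l + 1)) z i) hb)
      = headSum w u (l + 1) m (fun i => kernel2 (s - σ i) hb)
        + w (u (l + 1)) m * kernel2 (s - z) hb := by
    rw [head_succ w u l m _ (by omega) (by omega) hne]
    simp only [Function.update_self]
    congr 1
    unfold headSum
    refine Finset.sum_congr rfl fun i hi => ?_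
    simp only [Finset.mem_filter] at hi
    have hiv : i ≠ u (l + 1) := fun hc => hi.2 (l + 1) (by omega) le_rfl hc.symm
    simp only [Function.update_of_ne hiv]
  have htail : tailSum w u l m (fun m' j =>
        kernel2 (s - Function.update σ (u (l + 1)) z j)
          (Real.sqrt ((m' : ℝ) + 2) * hb.1, Real.sqrt ((m' : ℝ) + 2) * hb.2))
      = tailSum w u l m (fun m' j => kernel2 (s - σ j)
          (Real.sqrt ((m' : ℝ) + 2) * hb.1, Real.sqrt ((m' : ℝ) + 2) * hb.2)) := by
    unfold tailSum
    refine Finset.sum_congr rfl fun m' _ => Finset.sum_congr rfl fun c _ => ?_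
    congr 1
    refine Finset.sum_congr rfl fun j hj => ?_
    simp only [Finset.mem_filter, Finset.mem_Icc] at hj
    have hc0 : (c 0).val + 1 ≤ l := by
      have := (c 0).isLt
      omega
    have hjlt : j < u ((c 0).val + 1) := by
      have h2 : 2 ≤ u ((c 0).val + 1) := hu1 _ (by omega) (by omega)
      omega
    have hjv : j ≠ u (l + 1) := by
      rcases Nat.lt_or_ge ((c 0).val + 1) (l + 1) with h | h
      · have := u_lt_of_lt u L humono ((c 0).val + 1) (l + 1) (by omega) h hlL
        omega
      · omega
    simp only [Function.update_of_ne hjv]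
  rw [hhead, htail]
  ring

lemma condDens_eq_CF (w : ℕ → ℕ → ℝ) (u : ℕ → ℕ) (L : ℕ) (hb : ℝ × ℝ)
    (hb1 : 0 < hb.1) (hb2 : 0 < hb.2)
    (hnorm : ∀ m, 2 ≤ m → ∑ i ∈ Finset.Icc 1 (m - 1), w i m = 1)
    (hu1 : ∀ k, 1 ≤ k → k ≤ L → 1 < u k)
    (humono : ∀ k, 1 ≤ k → k < L → u k < u (k + 1)) :
    ∀ l, l ≤ L → ∀ m, 2 ≤ m → (∀ k, 1 ≤ k → k ≤ l → u k < m) →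
      ∀ (σ : ℕ → ℝ × ℝ) (s : ℝ × ℝ),
        condDens w hb u l σ m s = CF w hb u l m σ s := by
  intro l
  induction l with
  | zero =>
      intro _ m hm _ σ s
      simp only [condDens, CF, headSum, tailSum, Finset.range_zero, Finset.sum_empty, add_zero]
      exact Finset.sum_congr
        ((Finset.filter_true_of_mem (fun i _ => by omega)).symm.trans (filter_inst _ _ _ _))
        (fun i _ => rfl)
  | succ l ih =>
      intro hlL m hm hum σ s
      have hlL' : l ≤ L := by omega
      have hvm : u (l + 1) < m := hum (l + 1) (by omega) le_rfl
      have hv2 : 2 ≤ u (l + 1) := hu1 (l + 1) (by omega) hlL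
      have hum_l : ∀ k, 1 ≤ k → k ≤ l → u k < m := fun k hk1 hk2 => hum k hk1 (by omega)
      have hukv : ∀ k, 1 ≤ k → k ≤ l → u k < u (l + 1) := fun k hk1 hk2 =>
        u_lt_of_lt u L humono k (l + 1) hk1 (by omega) hlL
      set Bt : ℕ → ℝ × ℝ := fun m' =>
        (Real.sqrt ((m' : ℝ) + 2) * hb.1, Real.sqrt ((m' : ℝ) + 2) * hb.2) with hBt_def
      have hBt : ∀ m', 0 < (Bt m').1 ∧ 0 < (Bt m').2 := fun m' =>
        ⟨by simp only [hBt_def]; positivity, by simp only [hBt_def]; positivity⟩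
      have hKrw : condDens w hb u (l + 1) σ m s
          = ∫ z : ℝ × ℝ, CF w hb u l m (Function.update σ (u (l + 1)) z) s
              * CF w hb u l (u (l + 1)) σ z := by
        simp only [condDens]
        congr 1
        funext z
        rw [ih hlL' m hm hum_l, ih hlL' (u (l + 1)) hv2 hukv]
      rw [hKrw]
      have hBpos : ∀ m' : ℕ,
          0 < ((fun m'' : ℕ => (Real.sqrt ((m'' : ℝ) + 2) * hb.1,
              Real.sqrt ((m'' : ℝ) + 2) * hb.2)) m').1 ∧
          0 < ((fun m'' : ℕ => (Real.sqrt ((m'' : ℝ) + 2) * hb.1,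
              Real.sqrt ((m'' : ℝ) + 2) * hb.2)) m').2 := by
        intro m'
        constructor
        · show (0:ℝ) < Real.sqrt ((m' : ℝ) + 2) * hb.1
          positivity
        · show (0:ℝ) < Real.sqrt ((m' : ℝ) + 2) * hb.2
          positivity
      have hupd := fun z : ℝ × ℝ => CF_update w u L hu1 humono l hlL m hvm σ z s hb
      have hexp : (fun z : ℝ × ℝ => CF w hb u l m (Function.update σ (u (l + 1)) z) s
            * CF w hb u l (u (l + 1)) σ z)
          = fun z : ℝ × ℝ =>
            (((headSum w u (l + 1) m (fun i => kernel2 (s - σ i) hb)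
              + tailSum w u l m (fun m' j => kernel2 (s - σ j)
                  (Real.sqrt ((m' : ℝ) + 2) * hb.1, Real.sqrt ((m' : ℝ) + 2) * hb.2))) * headSum w u l (u (l + 1)) (fun i => kernel2 (z - σ i) hb)
              + (headSum w u (l + 1) m (fun i => kernel2 (s - σ i) hb)
              + tailSum w u l m (fun m' j => kernel2 (s - σ j)
                  (Real.sqrt ((m' : ℝ) + 2) * hb.1, Real.sqrt ((m' : ℝ) + 2) * hb.2))) * tailSum w u l (u (l + 1)) (fun m' j => kernel2 (z - σ j)
                  (Real.sqrt ((m' : ℝ) + 2) * hb.1, Real.sqrt ((m' : ℝ) + 2) * hb.2)))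
            + (w (u (l + 1)) m * (kernel2 (s - z) hb * headSum w u l (u (l + 1)) (fun i => kernel2 (z - σ i) hb))
              + w (u (l + 1)) m * (kernel2 (s - z) hb * tailSum w u l (u (l + 1)) (fun m' j => kernel2 (z - σ j)
                  (Real.sqrt ((m' : ℝ) + 2) * hb.1, Real.sqrt ((m' : ℝ) + 2) * hb.2))))) := by
        funext z
        rw [hupd z, CF]
        ring
      have I1 : MeasureTheory.Integrable (fun z : ℝ × ℝ =>
          headSum w u l (u (l + 1)) (fun i => kernel2 (z - σ i) hb)) :=
        integrable_headK w u l (u (l + 1)) σ hb1 hb2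
      have I2 : MeasureTheory.Integrable (fun z : ℝ × ℝ =>
          tailSum w u l (u (l + 1)) (fun m' j => kernel2 (z - σ j)
            (Real.sqrt ((m' : ℝ) + 2) * hb.1, Real.sqrt ((m' : ℝ) + 2) * hb.2))) :=
        integrable_tailK w u l (u (l + 1)) σ _ hBpos
      have I3 : MeasureTheory.Integrable (fun z : ℝ × ℝ => kernel2 (s - z) hb
          * headSum w u l (u (l + 1)) (fun i => kernel2 (z - σ i) hb)) :=
        integrable_mul_headK w u l (u (l + 1)) σ hb1 hb2 hb1 hb2 s
      have I4 : MeasureTheory.Integrable (fun z : ℝ × ℝ => kernel2 (s - z) hb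
          * tailSum w u l (u (l + 1)) (fun m' j => kernel2 (z - σ j)
            (Real.sqrt ((m' : ℝ) + 2) * hb.1, Real.sqrt ((m' : ℝ) + 2) * hb.2))) :=
        integrable_mul_tailK w u l (u (l + 1)) σ hb1 hb2 _ hBpos s
      have E1 : ∫ z : ℝ × ℝ, headSum w u l (u (l + 1)) (fun i => kernel2 (z - σ i) hb)
          = headSum w u l (u (l + 1)) (fun _ => 1) :=
        integral_headK w u l (u (l + 1)) σ hb1 hb2
      have E2 : ∫ z : ℝ × ℝ, tailSum w u l (u (l + 1)) (fun m' j => kernel2 (z - σ j)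
            (Real.sqrt ((m' : ℝ) + 2) * hb.1, Real.sqrt ((m' : ℝ) + 2) * hb.2))
          = tailSum w u l (u (l + 1)) (fun _ _ => 1) :=
        integral_tailK w u l (u (l + 1)) σ _ hBpos
      have C1 : (∫ z : ℝ × ℝ, kernel2 (s - z) hb
            * headSum w u l (u (l + 1)) (fun i => kernel2 (z - σ i) hb))
          = headSum w u l (u (l + 1)) (fun i => kernel2 (s - σ i)
              (Real.sqrt (hb.1 ^ 2 + hb.1 ^ 2), Real.sqrt (hb.2 ^ 2 + hb.2 ^ 2))) :=
        conv_headK w u l (u (l + 1)) σ hb1 hb2 hb1 hb2 s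
      have C2 : (∫ z : ℝ × ℝ, kernel2 (s - z) hb
            * tailSum w u l (u (l + 1)) (fun m' j => kernel2 (z - σ j)
              (Real.sqrt ((m' : ℝ) + 2) * hb.1, Real.sqrt ((m' : ℝ) + 2) * hb.2)))
          = tailSum w u l (u (l + 1)) (fun m' j => kernel2 (s - σ j)
              (Real.sqrt (hb.1 ^ 2 + (Real.sqrt ((m' : ℝ) + 2) * hb.1) ^ 2),
                Real.sqrt (hb.2 ^ 2 + (Real.sqrt ((m' : ℝ) + 2) * hb.2) ^ 2))) :=
        conv_tailK w u l (u (l + 1)) σ hb1 hb2 _ hBpos s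
      have C1' : headSum w u l (u (l + 1)) (fun i => kernel2 (s - σ i)
              (Real.sqrt (hb.1 ^ 2 + hb.1 ^ 2), Real.sqrt (hb.2 ^ 2 + hb.2 ^ 2)))
          = headSum w u l (u (l + 1)) (fun j => kernel2 (s - σ j)
              (Real.sqrt (((0 : ℕ) : ℝ) + 2) * hb.1, Real.sqrt (((0 : ℕ) : ℝ) + 2) * hb.2)) :=
        headSum_congr (fun i => by
          rw [sqrt_two_mul_self' hb1, sqrt_two_mul_self' hb2])
      have C2' : tailSum w u l (u (l + 1)) (fun m' j => kernel2 (s - σ j)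
              (Real.sqrt (hb.1 ^ 2 + (Real.sqrt ((m' : ℝ) + 2) * hb.1) ^ 2),
                Real.sqrt (hb.2 ^ 2 + (Real.sqrt ((m' : ℝ) + 2) * hb.2) ^ 2)))
          = tailSum w u l (u (l + 1)) (fun m' j => kernel2 (s - σ j)
              (Real.sqrt (((m' + 1 : ℕ) : ℝ) + 2) * hb.1,
                Real.sqrt (((m' + 1 : ℕ) : ℝ) + 2) * hb.2)) :=
        tailSum_congr (fun m' j => by
          rw [sqrt_succ_mul hb1 m', sqrt_succ_mul hb2 m'])
      have hmass := mass_eq w u L hnorm hu1 humono l hlL' (u (l + 1)) hv2 hukv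
      have J1 : MeasureTheory.Integrable (fun z : ℝ × ℝ => (headSum w u (l + 1) m (fun i => kernel2 (s - σ i) hb)
              + tailSum w u l m (fun m' j => kernel2 (s - σ j)
                  (Real.sqrt ((m' : ℝ) + 2) * hb.1, Real.sqrt ((m' : ℝ) + 2) * hb.2))) * headSum w u l (u (l + 1)) (fun i => kernel2 (z - σ i) hb)) := I1.const_mul _
      have J2 : MeasureTheory.Integrable (fun z : ℝ × ℝ => (headSum w u (l + 1) m (fun i => kernel2 (s - σ i) hb)
              + tailSum w u l m (fun m' j => kernel2 (s - σ j)
                  (Real.sqrt ((m' : ℝ) + 2) * hb.1, Real.sqrt ((m' : ℝ) + 2) * hb.2))) * tailSum w u l (u (l + 1)) (fun m' j => kernel2 (z - σ j)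
                  (Real.sqrt ((m' : ℝ) + 2) * hb.1, Real.sqrt ((m' : ℝ) + 2) * hb.2))) := I2.const_mul _
      have J3 : MeasureTheory.Integrable (fun z : ℝ × ℝ =>
          w (u (l + 1)) m * (kernel2 (s - z) hb * headSum w u l (u (l + 1)) (fun i => kernel2 (z - σ i) hb))) := I3.const_mul _
      have J4 : MeasureTheory.Integrable (fun z : ℝ × ℝ =>
          w (u (l + 1)) m * (kernel2 (s - z) hb * tailSum w u l (u (l + 1)) (fun m' j => kernel2 (z - σ j)
                  (Real.sqrt ((m' : ℝ) + 2) * hb.1, Real.sqrt ((m' : ℝ) + 2) * hb.2)))) := I4.const_mul _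
      have I12 : MeasureTheory.Integrable (fun z : ℝ × ℝ =>
          (headSum w u (l + 1) m (fun i => kernel2 (s - σ i) hb)
              + tailSum w u l m (fun m' j => kernel2 (s - σ j)
                  (Real.sqrt ((m' : ℝ) + 2) * hb.1, Real.sqrt ((m' : ℝ) + 2) * hb.2))) * headSum w u l (u (l + 1)) (fun i => kernel2 (z - σ i) hb)
          + (headSum w u (l + 1) m (fun i => kernel2 (s - σ i) hb)
              + tailSum w u l m (fun m' j => kernel2 (s - σ j)
                  (Real.sqrt ((m' : ℝ) + 2) * hb.1, Real.sqrt ((m' : ℝ) + 2) * hb.2))) * tailSum w u l (u (l + 1)) (fun m' j => kernel2 (z - σ j)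
                  (Real.sqrt ((m' : ℝ) + 2) * hb.1, Real.sqrt ((m' : ℝ) + 2) * hb.2))) := J1.add J2
      have I34 : MeasureTheory.Integrable (fun z : ℝ × ℝ =>
          w (u (l + 1)) m * (kernel2 (s - z) hb * headSum w u l (u (l + 1)) (fun i => kernel2 (z - σ i) hb))
          + w (u (l + 1)) m * (kernel2 (s - z) hb * tailSum w u l (u (l + 1)) (fun m' j => kernel2 (z - σ j)
                  (Real.sqrt ((m' : ℝ) + 2) * hb.1, Real.sqrt ((m' : ℝ) + 2) * hb.2)))) := J3.add J4
      rw [hexp]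
      rw [MeasureTheory.integral_add I12 I34,
        MeasureTheory.integral_add J1 J2,
        MeasureTheory.integral_add J3 J4,
        MeasureTheory.integral_const_mul, MeasureTheory.integral_const_mul,
        MeasureTheory.integral_const_mul, MeasureTheory.integral_const_mul,
        E1, E2, C1, C2, C1', C2']
      rw [CF]
      rw [tail_succ w u l m (fun m' j => kernel2 (s - σ j)
        (Real.sqrt ((m' : ℝ) + 2) * hb.1, Real.sqrt ((m' : ℝ) + 2) * hb.2))]
      linear_combination (headSum w u (l + 1) m (fun i => kernel2 (s - σ i) hb)
        + tailSum w u l m (fun m' j => kernel2 (s - σ j)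
            (Real.sqrt ((m' : ℝ) + 2) * hb.1, Real.sqrt ((m' : ℝ) + 2) * hb.2))) * hmass

open scoped Classical in
/-- Proposition 1 (general closed form with `L` missing points): with
`𝒮₁ = ∅, 𝒮₂ = {u₁}, …, 𝒮_{L+1} = {u₁,…,u_L}`, the density of `s_{n+1}` conditional on the
observed data `s_{(1:n)\𝒮_{L+1}}` (obtained by integrating out `s_{u₁},…,s_{u_L}`) equals
`Σ_{i∈(1:n)\𝒮_{L+1}} w_θ(i,n+1) κ₂(s − sᵢ, h̲)
 + Σ_{m=1}^{L} Σ_{1≤i₁<⋯<i_m≤L} w_θ(u_{i₁},u_{i₂})⋯w_θ(u_{i_{m−1}},u_{i_m})·w_θ(u_{i_m},n+1)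
     · Σ_{j∈(1:u_{i₁}−1)\𝒮_{i₁}} w_θ(j,u_{i₁}) κ₂(s − s_j, √(m+1)·h̲)`.
(Increasing `m`-tuples are encoded as strictly monotone maps `c : Fin (m'+1) → Fin L`, with
tuple length `m'+1` ranging over `1,…,L` and kernel bandwidth `√(m'+2)·h̲ = √((m'+1)+1)·h̲`.) -/
theorem prop1_general (w : ℕ → ℕ → ℝ) (u : ℕ → ℕ) (σ : ℕ → ℝ × ℝ) (L n : ℕ)
    (h δlon δlat : ℝ) (hh : 0 < h) (hδlon : 0 < δlon) (hδlat : 0 < δlat)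
    (hn : 1 ≤ n)
    (hu1 : ∀ k, 1 ≤ k → k ≤ L → 1 < u k)
    (humono : ∀ k, 1 ≤ k → k < L → u k < u (k + 1))
    (hun : ∀ k, 1 ≤ k → k ≤ L → u k ≤ n)
    (hw : ∀ i m, 0 ≤ w i m)
    (hnorm : ∀ m, 2 ≤ m → ∑ i ∈ Finset.Icc 1 (m - 1), w i m = 1)
    (s : ℝ × ℝ) :
    condDens w (h * δlon, h * δlat) u L σ (n + 1) s =
      (∑ i ∈ (Finset.Icc 1 n).filter (fun i => ∀ k, 1 ≤ k → k ≤ L → u k ≠ i),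
          w i (n + 1) * kernel2 (s - σ i) (h * δlon, h * δlat)) +
        ∑ m ∈ Finset.range L,
          ∑ c ∈ Finset.univ.filter (fun c : Fin (m + 1) → Fin L => StrictMono c),
            (∏ k : Fin m, w (u ((c k.castSucc).val + 1)) (u ((c k.succ).val + 1))) *
              w (u ((c (Fin.last m)).val + 1)) (n + 1) *
              ∑ j ∈ (Finset.Icc 1 (u ((c 0).val + 1) - 1)).filter
                  (fun j => ∀ k, 1 ≤ k → k ≤ (c 0).val → u k ≠ j),
                w j (u ((c 0).val + 1)) *
                  kernel2 (s - σ j)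
                    (Real.sqrt ((m : ℝ) + 2) * (h * δlon),
                      Real.sqrt ((m : ℝ) + 2) * (h * δlat)) := by
  have hb1 : (0:ℝ) < (h * δlon, h * δlat).1 := by
    show (0:ℝ) < h * δlon
    positivity
  have hb2 : (0:ℝ) < (h * δlon, h * δlat).2 := by
    show (0:ℝ) < h * δlat
    positivity
  have key := condDens_eq_CF w u L (h * δlon, h * δlat) hb1 hb2 hnorm hu1 humono L le_rfl
    (n + 1) (by omega) (fun k hk1 hk2 => by have := hun k hk1 hk2; omega) σ s
  rw [key, CF]
  rfl
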